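/- Fix an integer j and let w ∈ ℂ satisfy w² = 3(2d−1)(d−3). For every odd k, the set of points (x : y : z) ∈ ℙ²(ℂ) with z = 0 lying on the hyperosculating conic O_{j,k} = 0 equals the set of the two points ((d−2)(5d−3) + 2(d−1)w : d(d+1)ζ^{−j} : 0) and ((d−2)(5d−3) − 2(d−1)w : d(d+1)ζ^{−j} : 0); in particular this set is independent of k, and for d > 3 these are two distinct points, while for d = 3 they coincide with the single point (1 : ζ^{−j} : 0). Thus the d hyperosculating conics at the d co-linear sextactic points s_{j,k} (k odd) have two common points on the line z = 0 when d > 3, and one when d = 3. -/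

import Mathlib

open scoped LinearAlgebra.Projectivization

/-- The point of `ℙ²(ℂ)` with homogeneous coordinates `v` (junk value if `v = 0`). -/
noncomputable def P2mk (v : Fin 3 → ℂ) : ℙ ℂ (Fin 3 → ℂ) :=
  if hv : v ≠ 0 then Projectivization.mk ℂ v hv
  else Projectivization.mk ℂ ![1, 0, 0] (fun h => by simpa using congrFun h 0)


lemma P2mk_eq' (v : Fin 3 → ℂ) (hv : v ≠ 0) : P2mk v = Projectivization.mk ℂ v hv :=
  dif_pos hv

/-- Fix `j` and `w` with `w² = 3(2d-1)(d-3)`.  For every odd `k`, the intersection of the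
hyperosculating conic `O_{j,k}` of the Fermat curve `F_d` (at the sextactic point
`s_{j,k} = (ζ^j : 1 : u^{-k}c)`) with the line `z = 0` is the pair of points
`((d-2)(5d-3) ± 2(d-1)w : d(d+1)ζ^{-j} : 0)`; in particular it is independent of `k`.
For `d > 3` these are two distinct points, while for `d = 3` they coincide with the single
point `(1 : ζ^{-j} : 0)`.  Thus the `d` hyperosculating conics at the `d` co-linear
sextactic points `s_{j,k}` (`k` odd) have two common points on `z = 0` when `d > 3`, and
one when `d = 3`. -/
theorem fermat_hyperosculating_conics_B (d : ℕ) (hd : 3 ≤ d) (ζ u c : ℂ)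
    (hζ : IsPrimitiveRoot ζ d) (hu : IsPrimitiveRoot u (2 * d)) (hc : c ^ d = 2)
    (j : ℤ) (w : ℂ) (hw : w ^ 2 = 3 * (2 * (d : ℂ) - 1) * ((d : ℂ) - 3)) :
    (∀ k : ℤ, Odd k →
      {P : ℙ ℂ (Fin 3 → ℂ) | P.rep 2 = 0 ∧
          (d : ℂ) * ((d : ℂ) + 1) * ζ ^ (-2 * j) * P.rep 0 ^ 2
            + (d : ℂ) * ((d : ℂ) + 1) * P.rep 1 ^ 2
            - 4 * ((d : ℂ) + 1) * (2 * (d : ℂ) - 3) * u ^ (2 * k) * (c⁻¹) ^ 2 * P.rep 2 ^ 2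
            - 2 * ((d : ℂ) - 2) * (5 * (d : ℂ) - 3) * ζ ^ (-j) * P.rep 0 * P.rep 1
            + 8 * (d : ℂ) * ((d : ℂ) - 2) * ζ ^ (-j) * u ^ k * c⁻¹ * P.rep 0 * P.rep 2
            + 8 * (d : ℂ) * ((d : ℂ) - 2) * u ^ k * c⁻¹ * P.rep 1 * P.rep 2 = 0}
        = {P2mk ![((d : ℂ) - 2) * (5 * (d : ℂ) - 3) + 2 * ((d : ℂ) - 1) * w,
                  (d : ℂ) * ((d : ℂ) + 1) * ζ ^ (-j), 0],
           P2mk ![((d : ℂ) - 2) * (5 * (d : ℂ) - 3) - 2 * ((d : ℂ) - 1) * w,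
                  (d : ℂ) * ((d : ℂ) + 1) * ζ ^ (-j), 0]}) ∧
    (3 < d →
      P2mk ![((d : ℂ) - 2) * (5 * (d : ℂ) - 3) + 2 * ((d : ℂ) - 1) * w,
             (d : ℂ) * ((d : ℂ) + 1) * ζ ^ (-j), 0] ≠
      P2mk ![((d : ℂ) - 2) * (5 * (d : ℂ) - 3) - 2 * ((d : ℂ) - 1) * w,
             (d : ℂ) * ((d : ℂ) + 1) * ζ ^ (-j), 0]) ∧
    (d = 3 →
      P2mk ![((d : ℂ) - 2) * (5 * (d : ℂ) - 3) + 2 * ((d : ℂ) - 1) * w,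
             (d : ℂ) * ((d : ℂ) + 1) * ζ ^ (-j), 0] =
        P2mk ![((d : ℂ) - 2) * (5 * (d : ℂ) - 3) - 2 * ((d : ℂ) - 1) * w,
               (d : ℂ) * ((d : ℂ) + 1) * ζ ^ (-j), 0] ∧
      P2mk ![((d : ℂ) - 2) * (5 * (d : ℂ) - 3) + 2 * ((d : ℂ) - 1) * w,
             (d : ℂ) * ((d : ℂ) + 1) * ζ ^ (-j), 0] = P2mk ![1, ζ ^ (-j), 0]) := by
  have hd0 : (d : ℂ) ≠ 0 := Nat.cast_ne_zero.mpr (by omega)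
  have hd1 : (d : ℂ) + 1 ≠ 0 := by
    have h' : ((d + 1 : ℕ) : ℂ) ≠ 0 := Nat.cast_ne_zero.mpr (by omega)
    push_cast at h'
    exact h'
  have hζ0 : ζ ≠ 0 := hζ.ne_zero (by omega)
  set Z : ℂ := ζ ^ (-j) with hZdef
  have hZ0 : Z ≠ 0 := zpow_ne_zero _ hζ0
  have hZ2 : ζ ^ (-2 * j) = Z ^ 2 := by
    rw [hZdef, show (-2 * j) = (-j) * 2 by ring, zpow_mul, zpow_two]; ring
  have hB : (d : ℂ) * ((d : ℂ) + 1) * Z ≠ 0 := mul_ne_zero (mul_ne_zero hd0 hd1) hZ0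
  have hvp : (![((d : ℂ) - 2) * (5 * (d : ℂ) - 3) + 2 * ((d : ℂ) - 1) * w, (d : ℂ) * ((d : ℂ) + 1) * Z, 0] : Fin 3 → ℂ) ≠ 0 := fun h => hB (by simpa using congrFun h 1)
  have hvm : (![((d : ℂ) - 2) * (5 * (d : ℂ) - 3) - 2 * ((d : ℂ) - 1) * w, (d : ℂ) * ((d : ℂ) + 1) * Z, 0] : Fin 3 → ℂ) ≠ 0 := fun h => hB (by simpa using congrFun h 1)
  refine ⟨?_, ?_, ?_⟩
  · -- set equality for every odd k
    intro k _hk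
    ext P
    simp only [Set.mem_setOf_eq, Set.mem_insert_iff, Set.mem_singleton_iff]
    constructor
    · rintro ⟨h2, heq⟩
      rw [hZ2] at heq
      have E : (d : ℂ) * ((d : ℂ) + 1) * Z ^ 2 * (P.rep 0) ^ 2 + (d : ℂ) * ((d : ℂ) + 1) * (P.rep 1) ^ 2
          - 2 * (((d : ℂ) - 2) * (5 * (d : ℂ) - 3)) * Z * (P.rep 0) * (P.rep 1) = 0 := by
        linear_combination heq + (4 * ((d : ℂ) + 1) * (2 * (d : ℂ) - 3) * u ^ (2 * k) * (c⁻¹) ^ 2 * (P.rep 2)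
          - 8 * (d : ℂ) * ((d : ℂ) - 2) * Z * u ^ k * c⁻¹ * (P.rep 0)
          - 8 * (d : ℂ) * ((d : ℂ) - 2) * u ^ k * c⁻¹ * (P.rep 1)) * h2
      have hy : P.rep 1 ≠ 0 := by
        intro hy0
        have hx2 : (d : ℂ) * ((d : ℂ) + 1) * Z ^ 2 * (P.rep 0) ^ 2 = 0 := by
          linear_combination E + (2 * (((d : ℂ) - 2) * (5 * (d : ℂ) - 3)) * Z * (P.rep 0) - (d : ℂ) * ((d : ℂ) + 1) * (P.rep 1)) * hy0
        have hx : P.rep 0 = 0 := by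
          rcases mul_eq_zero.mp hx2 with h | h
          · exact absurd h (mul_ne_zero (mul_ne_zero hd0 hd1) (pow_ne_zero 2 hZ0))
          · exact pow_eq_zero_iff (n := 2) (by norm_num) |>.mp h
        exact P.rep_nonzero (funext fun i => by fin_cases i <;> simpa [hx, hy0] using h2)
      have hfact : ((d : ℂ) * ((d : ℂ) + 1) * Z * (P.rep 0) - ((((d : ℂ) - 2) * (5 * (d : ℂ) - 3)) + 2 * ((d : ℂ) - 1) * w) * (P.rep 1)) *
          ((d : ℂ) * ((d : ℂ) + 1) * Z * (P.rep 0) - ((((d : ℂ) - 2) * (5 * (d : ℂ) - 3)) - 2 * ((d : ℂ) - 1) * w) * (P.rep 1)) = 0 := by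
        linear_combination ((d : ℂ) * ((d : ℂ) + 1)) * E - 4 * ((d : ℂ) - 1) ^ 2 * (P.rep 1) ^ 2 * hw
      rcases mul_eq_zero.mp hfact with hf | hf
      · left
        rw [P2mk_eq' _ hvp, ← Projectivization.mk_rep P,
          Projectivization.mk_eq_mk_iff' ℂ _ _ P.rep_nonzero hvp]
        refine ⟨P.rep 1 / ((d : ℂ) * ((d : ℂ) + 1) * Z), funext fun i => ?_⟩
        fin_cases i <;> simp only [Pi.smul_apply, Fin.zero_eta, Fin.mk_one, Matrix.cons_val_zero, Matrix.cons_val_one,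
            Matrix.head_cons, smul_eq_mul, Fin.isValue]
        · field_simp
          linear_combination -hf
        · field_simp
        · simpa using h2.symm
      · right
        rw [P2mk_eq' _ hvm, ← Projectivization.mk_rep P,
          Projectivization.mk_eq_mk_iff' ℂ _ _ P.rep_nonzero hvm]
        refine ⟨P.rep 1 / ((d : ℂ) * ((d : ℂ) + 1) * Z), funext fun i => ?_⟩
        fin_cases i <;> simp only [Pi.smul_apply, Fin.zero_eta, Fin.mk_one, Matrix.cons_val_zero, Matrix.cons_val_one,
            Matrix.head_cons, smul_eq_mul, Fin.isValue]
        · field_simp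
          linear_combination -hf
        · field_simp
        · simpa using h2.symm
    · intro hP
      rcases hP with h | h
      · obtain ⟨a, ha⟩ : ∃ a : ℂ, a • (![((d : ℂ) - 2) * (5 * (d : ℂ) - 3) + 2 * ((d : ℂ) - 1) * w, (d : ℂ) * ((d : ℂ) + 1) * Z, 0] : Fin 3 → ℂ) = P.rep := by
          rw [← Projectivization.mk_eq_mk_iff' ℂ _ _ P.rep_nonzero hvp,
            Projectivization.mk_rep, h, P2mk_eq' _ hvp]
        have h0 : P.rep 0 = a * ((((d : ℂ) - 2) * (5 * (d : ℂ) - 3)) + 2 * ((d : ℂ) - 1) * w) := by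
          rw [← ha]; simp
        have h1 : P.rep 1 = a * ((d : ℂ) * ((d : ℂ) + 1) * Z) := by
          rw [← ha]; simp
        have h2 : P.rep 2 = 0 := by
          rw [← ha]; simp
        refine ⟨h2, ?_⟩
        rw [hZ2, h0, h1, h2]
        linear_combination (4 * ((d : ℂ) - 1) ^ 2 * (d : ℂ) * ((d : ℂ) + 1) * Z ^ 2 * a ^ 2) * hw
      · obtain ⟨a, ha⟩ : ∃ a : ℂ, a • (![((d : ℂ) - 2) * (5 * (d : ℂ) - 3) - 2 * ((d : ℂ) - 1) * w, (d : ℂ) * ((d : ℂ) + 1) * Z, 0] : Fin 3 → ℂ) = P.rep := by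
          rw [← Projectivization.mk_eq_mk_iff' ℂ _ _ P.rep_nonzero hvm,
            Projectivization.mk_rep, h, P2mk_eq' _ hvm]
        have h0 : P.rep 0 = a * ((((d : ℂ) - 2) * (5 * (d : ℂ) - 3)) - 2 * ((d : ℂ) - 1) * w) := by
          rw [← ha]; simp
        have h1 : P.rep 1 = a * ((d : ℂ) * ((d : ℂ) + 1) * Z) := by
          rw [← ha]; simp
        have h2 : P.rep 2 = 0 := by
          rw [← ha]; simp
        refine ⟨h2, ?_⟩
        rw [hZ2, h0, h1, h2]
        linear_combination (4 * ((d : ℂ) - 1) ^ 2 * (d : ℂ) * ((d : ℂ) + 1) * Z ^ 2 * a ^ 2) * hw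
  · -- the two points are distinct when 3 < d
    intro hd3
    have hw0 : w ≠ 0 := by
      intro h
      rw [h] at hw
      have h3 : ((d : ℂ) - 3) ≠ 0 := by
        intro hh
        have : (d : ℕ) = 3 := by exact_mod_cast sub_eq_zero.mp hh
        omega
      have h2d : (2 * (d : ℂ) - 1) ≠ 0 := by
        intro hh
        have h' : ((2 * d : ℕ) : ℂ) = ((1 : ℕ) : ℂ) := by push_cast; linear_combination hh
        have : (2 * d : ℕ) = 1 := Nat.cast_injective h'
        omega
      have hz : (3 : ℂ) * (2 * (d : ℂ) - 1) * ((d : ℂ) - 3) = 0 := by linear_combination -hw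
      rcases mul_eq_zero.mp hz with h' | h'
      · rcases mul_eq_zero.mp h' with h'' | h''
        · norm_num at h''
        · exact h2d h''
      · exact h3 h'
    intro hPQ
    rw [P2mk_eq' _ hvp, P2mk_eq' _ hvm,
      Projectivization.mk_eq_mk_iff' ℂ _ _ hvp hvm] at hPQ
    obtain ⟨a, ha⟩ := hPQ
    have h1 : a * ((d : ℂ) * ((d : ℂ) + 1) * Z) = (d : ℂ) * ((d : ℂ) + 1) * Z := by simpa using congrFun ha 1
    have ha1 : a = 1 := by
      have := mul_right_cancel₀ hB (h1.trans (one_mul ((d : ℂ) * ((d : ℂ) + 1) * Z)).symm)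
      exact this
    have h0 : a * ((((d : ℂ) - 2) * (5 * (d : ℂ) - 3)) - 2 * ((d : ℂ) - 1) * w) = (((d : ℂ) - 2) * (5 * (d : ℂ) - 3)) + 2 * ((d : ℂ) - 1) * w := by
      simpa using congrFun ha 0
    rw [ha1, one_mul] at h0
    have hD1 : (d : ℂ) - 1 ≠ 0 := by
      intro hh
      have : (d : ℕ) = 1 := by exact_mod_cast sub_eq_zero.mp hh
      omega
    have hz : 4 * ((d : ℂ) - 1) * w = 0 := by linear_combination -h0
    rcases mul_eq_zero.mp hz with h' | h'
    · rcases mul_eq_zero.mp h' with h'' | h''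
      · norm_num at h''
      · exact hD1 h''
    · exact hw0 h'
  · -- d = 3 case
    intro hd3
    have hd3' : (d : ℂ) = 3 := by rw [hd3]; norm_num
    have hw0 : w = 0 := by
      have hsq : w ^ 2 = 0 := by rw [hw, hd3']; ring
      exact pow_eq_zero_iff (n := 2) (by norm_num) |>.mp hsq
    have hvv : (![((d : ℂ) - 2) * (5 * (d : ℂ) - 3) + 2 * ((d : ℂ) - 1) * w, (d : ℂ) * ((d : ℂ) + 1) * Z, 0] : Fin 3 → ℂ) = (![((d : ℂ) - 2) * (5 * (d : ℂ) - 3) - 2 * ((d : ℂ) - 1) * w, (d : ℂ) * ((d : ℂ) + 1) * Z, 0] : Fin 3 → ℂ) := by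
      funext i
      fin_cases i <;> simp [hw0]
    refine ⟨by rw [hvv], ?_⟩
    have h1 : (![1, Z, 0] : Fin 3 → ℂ) ≠ 0 := fun h => by simpa using congrFun h 0
    rw [P2mk_eq' _ hvp, P2mk_eq' _ h1,
      Projectivization.mk_eq_mk_iff' ℂ _ _ hvp h1]
    refine ⟨12, funext fun i => ?_⟩
    fin_cases i <;> simp [hw0, hd3'] <;> norm_num
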